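/- Let $X_n = \{1, \dots, n\}$ and let $F(n)$ denote the minimum cardinality of a family $F$ of 3-element subsets of $X_n$ such that every pair of distinct elements of $X_n$ is contained in some member of $F$ (a covering design $C(n,3,2)$). Then for every $k \ge 2$, $F(2k+1) \le k^2$ and $F(2k) \le k^2 - 1$. -/

import Mathlib

/-- The minimal number of triples from an n-element set needed so that every
pair of distinct elements is contained in at least one triple. -/
noncomputable def coverNum (n : ℕ) : ℕ :=
  sInf {c : ℕ | ∃ F : Finset (Finset (Fin n)), F.card = c ∧ (∀ f ∈ F, f.card = 3) ∧
    ∀ i j : Fin n, i ≠ j → ∃ f ∈ F, i ∈ f ∧ j ∈ f}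

def Covers (n c : ℕ) : Prop :=
  ∃ F : Finset (Finset (Fin n)), F.card ≤ c ∧ (∀ f ∈ F, f.card = 3) ∧
    ∀ i j : Fin n, i ≠ j → ∃ f ∈ F, i ∈ f ∧ j ∈ f

lemma coverNum_le_of {n c : ℕ} (h : Covers n c) : coverNum n ≤ c := by
  obtain ⟨F, hc, h3, hcov⟩ := h
  exact le_trans (Nat.sInf_le ⟨F, rfl, h3, hcov⟩) hc

lemma covers_four : Covers 4 3 := by
  refine ⟨{({0,1,2} : Finset (Fin 4)), {0,1,3}, {2,3,0}}, by decide, by decide, by decide⟩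

lemma covers_five : Covers 5 4 := by
  refine ⟨{({0,1,2} : Finset (Fin 5)), {0,3,4}, {1,3,4}, {2,3,4}}, by decide, by decide,
    by decide⟩

lemma covers_step (n c : ℕ) (hn : 1 ≤ n) (h : Covers n c) : Covers (n + 2) (c + n) := by
  obtain ⟨F, hcard, h3, hcov⟩ := h
  have hle : n ≤ n + 2 := by omega
  let e : Fin n ↪ Fin (n + 2) := Fin.castLEEmb hle
  have heval : ∀ v : Fin n, (e v).val = v.val := fun v => rfl
  let a : Fin (n + 2) := ⟨n, by omega⟩
  let b : Fin (n + 2) := ⟨n + 1, by omega⟩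
  have hmem : ∀ (v : Fin n) (x : Fin (n + 2)),
      (x.val = v.val ∨ x.val = n ∨ x.val = n + 1) →
      x ∈ ({e v, a, b} : Finset (Fin (n + 2))) := by
    intro v x hx
    simp only [Finset.mem_insert, Finset.mem_singleton]
    rcases hx with h | h | h
    · exact Or.inl (Fin.ext (h.trans (heval v).symm))
    · exact Or.inr (Or.inl (Fin.ext h))
    · exact Or.inr (Or.inr (Fin.ext h))
  have hg3 : ∀ v : Fin n, ({e v, a, b} : Finset (Fin (n + 2))).card = 3 := by
    intro v
    rw [Finset.card_eq_three]
    refine ⟨e v, a, b, ?_, ?_, ?_, rfl⟩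
    · have := v.isLt
      simp only [ne_eq, Fin.ext_iff, heval, a, b, Fin.val_mk]; omega
    · have := v.isLt
      simp only [ne_eq, Fin.ext_iff, heval, a, b, Fin.val_mk]; omega
    · simp only [ne_eq, Fin.ext_iff, a, b, Fin.val_mk]; omega
  refine ⟨F.image (fun f => f.map e) ∪
    Finset.univ.image (fun v : Fin n => ({e v, a, b} : Finset (Fin (n + 2)))), ?_, ?_, ?_⟩
  · calc _ ≤ (F.image (fun f => f.map e)).card +
        (Finset.univ.image (fun v : Fin n => ({e v, a, b} : Finset (Fin (n + 2))))).card :=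
          Finset.card_union_le _ _
      _ ≤ c + n := by
          have h1 : (F.image (fun f => f.map e)).card ≤ c :=
            le_trans Finset.card_image_le hcard
          have h2 := le_trans
            (Finset.card_image_le (s := (Finset.univ : Finset (Fin n)))
              (f := fun v : Fin n => ({e v, a, b} : Finset (Fin (n + 2)))))
            (le_of_eq (Finset.card_univ))
          simp only [Fintype.card_fin] at h2
          omega
  · intro f hf
    rcases Finset.mem_union.mp hf with hf | hf
    · obtain ⟨g, hg, rfl⟩ := Finset.mem_image.mp hf
      rw [Finset.card_map]; exact h3 g hg
    · obtain ⟨v, _, rfl⟩ := Finset.mem_image.mp hf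
      exact hg3 v
  · intro i j hij
    by_cases hi : i.val < n <;> by_cases hj : j.val < n
    · obtain ⟨f, hf, hif, hjf⟩ := hcov ⟨i, hi⟩ ⟨j, hj⟩ (by
        simp only [ne_eq, Fin.ext_iff] at hij ⊢; exact hij)
      refine ⟨f.map e, Finset.mem_union_left _ (Finset.mem_image_of_mem _ hf), ?_, ?_⟩
      · exact Finset.mem_map.mpr ⟨⟨i, hi⟩, hif, Fin.ext (heval _)⟩
      · exact Finset.mem_map.mpr ⟨⟨j, hj⟩, hjf, Fin.ext (heval _)⟩
    · refine ⟨{e ⟨i, hi⟩, a, b}, Finset.mem_union_right _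
        (Finset.mem_image_of_mem _ (Finset.mem_univ _)), ?_, ?_⟩
      · exact hmem ⟨i.val, hi⟩ i (Or.inl rfl)
      · exact hmem ⟨i.val, hi⟩ j (by have := j.isLt; omega)
    · refine ⟨{e ⟨j, hj⟩, a, b}, Finset.mem_union_right _
        (Finset.mem_image_of_mem _ (Finset.mem_univ _)), ?_, ?_⟩
      · exact hmem ⟨j.val, hj⟩ i (by have := i.isLt; omega)
      · exact hmem ⟨j.val, hj⟩ j (Or.inl rfl)
    · refine ⟨{e ⟨0, hn⟩, a, b}, Finset.mem_union_right _
        (Finset.mem_image_of_mem _ (Finset.mem_univ _)), ?_, ?_⟩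
      · exact hmem ⟨0, hn⟩ i (by have := i.isLt; omega)
      · exact hmem ⟨0, hn⟩ j (by have := j.isLt; omega)

lemma covers_mono {n c c' : ℕ} (h : Covers n c) (hcc : c ≤ c') : Covers n c' := by
  obtain ⟨F, hc, h3, hcov⟩ := h
  exact ⟨F, le_trans hc hcc, h3, hcov⟩

lemma covers_main : ∀ k : ℕ, 2 ≤ k → Covers (2 * k + 1) (k ^ 2) ∧ Covers (2 * k) (k ^ 2 - 1) := by
  intro k hk
  induction k, hk using Nat.le_induction with
  | base => exact ⟨by simpa using covers_five, by simpa using covers_four⟩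
  | succ k hk ih =>
    obtain ⟨h1, h2⟩ := ih
    constructor
    · have hs := covers_step (2 * k + 1) (k ^ 2) (by omega) h1
      have harith : 2 * (k + 1) + 1 = 2 * k + 1 + 2 := by ring
      have harith2 : (k + 1) ^ 2 = k ^ 2 + (2 * k + 1) := by ring
      rw [harith, harith2]; exact hs
    · have hs := covers_step (2 * k) (k ^ 2 - 1) (by omega) h2
      have harith : 2 * (k + 1) = 2 * k + 2 := by ring
      have hk2 : 1 ≤ k ^ 2 := Nat.one_le_pow _ _ (by omega)
      have harith2 : (k + 1) ^ 2 = k ^ 2 + 2 * k + 1 := by ring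
      rw [harith]
      exact covers_mono hs (by omega)

theorem coverNum_le (k : ℕ) (hk : 2 ≤ k) :
    coverNum (2 * k + 1) ≤ k ^ 2 ∧ coverNum (2 * k) ≤ k ^ 2 - 1 := by
  obtain ⟨h1, h2⟩ := covers_main k hk
  exact ⟨coverNum_le_of h1, coverNum_le_of h2⟩
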